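/- For a Schwartz function F on ℝ^{2d}, ( ∫_{ℝ^d} |F̂(x,x)|² dx )^{1/2} ≤ ( ∫_{ℝ^d} [ ∫_{ℝ^d} |F((x-y)/2, (x+y)/2)| dy ]² dx )^{1/2}. -/

import Mathlib

open MeasureTheory Real
open scoped FourierTransform

noncomputable section

/-- `ℝ^n` with its Euclidean structure. -/
abbrev E (n : ℕ) : Type := EuclideanSpace ℝ (Fin n)

/-- The identification `ℝ^d × ℝ^d ≃ ℝ^{2d}`. -/
def app {k m : ℕ} (a : E k) (b : E m) : E (k + m) :=
  (EuclideanSpace.equiv (Fin (k + m)) ℝ).symm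
    (Fin.append ((EuclideanSpace.equiv (Fin k) ℝ) a) ((EuclideanSpace.equiv (Fin m) ℝ) b))

variable {k m : ℕ}

lemma app_apply (a : E k) (b : E m) (i : Fin (k+m)) : app a b i = Fin.append (⇑a) (⇑b) i := rfl

lemma app_add (a u : E k) (b v : E m) : app (a+u) (b+v) = app a b + app u v := by
  ext i
  refine Fin.addCases (fun j => ?_) (fun j => ?_) i <;>
    simp [app_apply, Fin.append_left, Fin.append_right]

lemma app_sub (a u : E k) (b v : E m) : app (a-u) (b-v) = app a b - app u v := by
  ext i
  refine Fin.addCases (fun j => ?_) (fun j => ?_) i <;>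
    simp [app_apply, Fin.append_left, Fin.append_right]

lemma inner_app (a u : E k) (b v : E m) :
    (inner ℝ (app a b) (app u v) : ℝ) = inner ℝ a u + inner ℝ b v := by
  simp only [PiLp.inner_apply, RCLike.inner_apply, conj_trivial]
  rw [Fin.sum_univ_add]
  simp [app_apply, Fin.append_left, Fin.append_right]

lemma norm_app_sq (a : E k) (b : E m) : ‖app a b‖^2 = ‖a‖^2 + ‖b‖^2 := by
  rw [← real_inner_self_eq_norm_sq, ← real_inner_self_eq_norm_sq, ← real_inner_self_eq_norm_sq,
    inner_app]

lemma norm_le_norm_app (a : E k) (b : E m) : ‖a‖ ≤ ‖app a b‖ := by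
  have h := norm_app_sq a b
  nlinarith [norm_nonneg a, norm_nonneg b, norm_nonneg (app a b), sq_nonneg ‖b‖]

lemma app_smul (c : ℝ) (a : E k) (b : E m) : app (c • a) (c • b) = c • app a b := by
  ext i
  refine Fin.addCases (fun j => ?_) (fun j => ?_) i <;>
    simp [app_apply, Fin.append_left, Fin.append_right]

lemma norm_app_diag_le (c : E k) : ‖app c c‖ ≤ 2 * ‖c‖ := by
  have h := norm_app_sq c c
  nlinarith [norm_nonneg c, norm_nonneg (app c c)]

lemma continuous_app_diag : Continuous fun x : E k => app x x := by
  apply (LipschitzWith.of_dist_le_mul (K := 2) ?_).continuous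
  intro x y
  have : app x x - app y y = app (x - y) (x - y) := (app_sub _ _ _ _).symm
  rw [dist_eq_norm, dist_eq_norm, this]
  simpa using norm_app_diag_le (x - y)

def appEquiv (k m : ℕ) : (E k × E m) ≃ᵐ E (k + m) :=
  (((MeasurableEquiv.toLp 2 (Fin k → ℝ)).symm).prodCongr
      ((MeasurableEquiv.toLp 2 (Fin m → ℝ)).symm)).trans
    (((MeasurableEquiv.sumPiEquivProdPi (fun _ : Fin k ⊕ Fin m => ℝ)).symm).trans
      (((MeasurableEquiv.piCongrLeft (fun _ => ℝ) finSumFinEquiv)).trans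
        ((MeasurableEquiv.toLp 2 (Fin (k + m) → ℝ)).symm).symm))

lemma coe_appEquiv : ⇑(appEquiv k m) = fun p : E k × E m => app p.1 p.2 := by
  funext p
  ext i
  refine Fin.addCases (fun j => ?_) (fun j => ?_) i
  · have h1 : appEquiv k m p (finSumFinEquiv (Sum.inl j)) =
        Equiv.piCongrLeft (fun _ => ℝ) finSumFinEquiv
          ((Equiv.sumPiEquivProdPi fun _ => ℝ).symm (⇑p.1, ⇑p.2)) (finSumFinEquiv (Sum.inl j)) :=
      rfl
    have h2 : Fin.castAdd m j = finSumFinEquiv (Sum.inl j) := rfl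
    rw [app_apply, h2, h1, Equiv.piCongrLeft_sumInl, ← h2,
      Fin.append_left]
  · have h1 : appEquiv k m p (finSumFinEquiv (Sum.inr j)) =
        Equiv.piCongrLeft (fun _ => ℝ) finSumFinEquiv
          ((Equiv.sumPiEquivProdPi fun _ => ℝ).symm (⇑p.1, ⇑p.2)) (finSumFinEquiv (Sum.inr j)) :=
      rfl
    have h2 : Fin.natAdd k j = finSumFinEquiv (Sum.inr j) := rfl
    rw [app_apply, h2, h1, Equiv.piCongrLeft_sumInr, ← h2,
      Fin.append_right]

lemma mp_appEquiv : MeasurePreserving (appEquiv k m) volume volume := by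
  have h4 : MeasurePreserving
      (Prod.map ((MeasurableEquiv.toLp 2 (Fin k → ℝ)).symm) ((MeasurableEquiv.toLp 2 (Fin m → ℝ)).symm))
      volume volume :=
    (EuclideanSpace.volume_preserving_symm_measurableEquiv_toLp (Fin k)).prod
      (EuclideanSpace.volume_preserving_symm_measurableEquiv_toLp (Fin m))
  have h3 : MeasurePreserving (MeasurableEquiv.sumPiEquivProdPi (fun _ : Fin k ⊕ Fin m => ℝ)).symm
      volume volume := volume_measurePreserving_sumPiEquivProdPi_symm (fun _ => ℝ)
  have h2 : MeasurePreserving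
      (MeasurableEquiv.piCongrLeft (fun _ : Fin (k + m) => ℝ) (finSumFinEquiv (m := k) (n := m)))
      volume volume :=
    volume_measurePreserving_piCongrLeft (fun _ => ℝ) finSumFinEquiv
  have h1 : MeasurePreserving ((MeasurableEquiv.toLp 2 (Fin (k + m) → ℝ)).symm).symm volume volume :=
    (EuclideanSpace.volume_preserving_symm_measurableEquiv_toLp (Fin (k + m))).symm
  exact h1.comp (h2.comp (h3.comp h4))

lemma mp_app : MeasurePreserving (fun p : E k × E m => app p.1 p.2) volume volume := by
  rw [← coe_appEquiv]; exact mp_appEquiv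

lemma integral_app {G : Type*} [NormedAddCommGroup G] [NormedSpace ℝ G]
    (f : E (k + m) → G) : ∫ z, f z = ∫ p : E k × E m, f (app p.1 p.2) := by
  conv_lhs => rw [← (mp_appEquiv (k := k) (m := m)).map_eq]
  rw [integral_map_equiv, coe_appEquiv]

lemma continuous_app : Continuous fun p : E k × E m => app p.1 p.2 := by
  apply (LipschitzWith.of_dist_le_mul (K := 2) ?_).continuous
  rintro ⟨a, b⟩ ⟨u, v⟩
  have h : app a b - app u v = app (a - u) (b - v) := (app_sub _ _ _ _).symm
  rw [dist_eq_norm, h, Prod.dist_eq]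
  have h2 := norm_app_sq (a - u) (b - v)
  have hd1 : dist a u = ‖a - u‖ := dist_eq_norm a u
  have hd2 : dist b v = ‖b - v‖ := dist_eq_norm b v
  have hle : ‖a - u‖ ≤ max (dist a u) (dist b v) := hd1 ▸ le_max_left _ _
  have hle2 : ‖b - v‖ ≤ max (dist a u) (dist b v) := hd2 ▸ le_max_right _ _
  dsimp only
  push_cast
  have hM : (0:ℝ) ≤ max (dist a u) (dist b v) :=
    le_trans dist_nonneg (le_max_left _ _)
  have hsq : ‖app (a - u) (b - v)‖ ^ 2 ≤ (2 * max (dist a u) (dist b v)) ^ 2 := by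
    nlinarith [norm_nonneg (a - u), norm_nonneg (b - v)]
  exact le_of_pow_le_pow_left₀ two_ne_zero (by positivity) hsq

lemma mp_shear {n : ℕ} :
    MeasurePreserving (fun p : E n × E n => (p.1, p.2 - p.1)) volume volume := by
  have : (volume : Measure (E n × E n)) = (volume : Measure (E n)).prod volume := rfl
  rw [this]
  exact (MeasurePreserving.id _).skew_product
    (measurable_snd.sub measurable_fst)
    (Filter.Eventually.of_forall fun u => map_sub_right_eq_self volume u)

lemma schwartz_decay {n : ℕ} (f : SchwartzMap (E n) ℂ) (r : ℕ) :
    ∃ C : ℝ, 0 ≤ C ∧ ∀ z, ‖f z‖ ≤ C * ((1 + ‖z‖) ^ r)⁻¹ := by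
  refine ⟨2 ^ r * ((Finset.Iic (r, 0)).sup
      (fun m' => SchwartzMap.seminorm ℝ m'.1 m'.2 (E := E n) (F := ℂ)) f),
    by positivity, fun z => ?_⟩
  have h := SchwartzMap.one_add_le_sup_seminorm_apply (𝕜 := ℝ) (m := (r, 0)) (k := r) (n := 0)
    le_rfl le_rfl f z
  rw [norm_iteratedFDeriv_zero] at h
  have hpos : (0:ℝ) < (1 + ‖z‖) ^ r := by positivity
  rw [mul_comm, inv_mul_eq_div, le_div_iff₀ hpos]
  nlinarith [h]

lemma one_add_pow_inv_anti {a b : ℝ} (r : ℕ) (ha : 0 ≤ a) (hab : a ≤ b) :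
    ((1 + b) ^ r)⁻¹ ≤ ((1 + a) ^ r)⁻¹ := by
  have h1 : (0:ℝ) < (1 + a) ^ r := by positivity
  exact inv_anti₀ h1 (pow_le_pow_left₀ (by linarith) (by linarith) r)

lemma Bd_integrable (n : ℕ) : Integrable (fun u : E n => ((1 + ‖u‖) ^ (n + 1))⁻¹) := by
  have h : ((n : ℝ)) < ((n : ℝ) + 1) := by linarith
  have h2 : (Module.finrank ℝ (E n) : ℝ) < ((n : ℝ) + 1) := by
    rwa [finrank_euclideanSpace_fin]
  have := integrable_one_add_norm (E := E n) (μ := volume) (r := (n : ℝ) + 1) h2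
  refine this.congr ?_
  filter_upwards with u
  rw [← Real.rpow_natCast (1 + ‖u‖) (n + 1), ← Real.rpow_neg (by positivity)]
  push_cast
  ring_nf

lemma schwartz_app_bound {d : ℕ} (f : SchwartzMap (E (d + d)) ℂ) :
    ∃ C : ℝ, 0 ≤ C ∧ ∀ u v : E d, ‖f (app u v)‖ ≤ C * ((1 + ‖u‖) ^ (d + 1))⁻¹ := by
  obtain ⟨C, hC0, hC⟩ := schwartz_decay f (d + 1)
  refine ⟨C, hC0, fun u v => (hC (app u v)).trans ?_⟩
  exact mul_le_mul_of_nonneg_left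
    (one_add_pow_inv_anti _ (norm_nonneg u) (norm_le_norm_app u v)) hC0

lemma integral_complex_ofReal'' {α : Type*} [MeasurableSpace α] {μ : Measure α} {f : α → ℝ} :
    ∫ x, Complex.ofReal (f x) ∂μ = Complex.ofReal (∫ x, f x ∂μ) :=
  integral_ofReal

lemma fourier_conj {n : ℕ} (f : E n → ℂ) (x : E n) :
    𝓕 (fun y => (starRingEnd ℂ) (f y)) x = (starRingEnd ℂ) (𝓕⁻ f x) := by
  rw [Real.fourier_eq, Real.fourierInv_eq, ← integral_conj]
  congr 1
  funext v
  rw [Circle.smul_def, Circle.smul_def, smul_eq_mul, smul_eq_mul, map_mul]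
  congr 1
  rw [← Circle.coe_inv_eq_conj, ← AddChar.map_neg_eq_inv]

lemma plancherel_aux {n : ℕ} {g : E n → ℂ} (hgc : Continuous g) (hg : Integrable g)
    (hFg : Integrable (𝓕 g)) :
    ∫ x, ‖𝓕 g x‖ ^ 2 = ∫ x, ‖g x‖ ^ 2 := by
  have hψ : Integrable (fun x : E n => (starRingEnd ℂ) (𝓕 g x)) := by
    refine hFg.mono ?_ (ae_of_all _ fun x => by simp)
    exact (Complex.continuous_conj).comp_aestronglyMeasurable hFg.1
  have flip := VectorFourier.integral_fourierIntegral_smul_eq_flip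
    (e := Real.fourierChar) (L := innerₗ (E n)) (f := g)
    (g := fun x => (starRingEnd ℂ) (𝓕 g x))
    Real.continuous_fourierChar continuous_inner hg hψ
  rw [flip_innerₗ] at flip
  have h1 : (VectorFourier.fourierIntegral 𝐞 volume (innerₗ (E n)) g) = 𝓕 g := rfl
  have h2 : (VectorFourier.fourierIntegral 𝐞 volume (innerₗ (E n))
      fun x => (starRingEnd ℂ) (𝓕 g x)) = 𝓕 (fun x => (starRingEnd ℂ) (𝓕 g x)) := rfl
  rw [h1, h2] at flip
  have h3 : ∀ x, 𝓕 (fun y => (starRingEnd ℂ) (𝓕 g y)) x = (starRingEnd ℂ) (g x) := by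
    intro x
    rw [fourier_conj (𝓕 g) x, Continuous.fourierInv_fourier_eq hgc hg hFg]
  simp_rw [h3, smul_eq_mul] at flip
  have h4 : ∀ z : ℂ, z * (starRingEnd ℂ) z = ((‖z‖ ^ 2 : ℝ) : ℂ) := fun z => by
    rw [Complex.mul_conj, Complex.normSq_eq_norm_sq]
  simp_rw [h4] at flip
  have key : ((∫ x, ‖𝓕 g x‖ ^ 2 : ℝ) : ℂ) = ((∫ x, ‖g x‖ ^ 2 : ℝ) : ℂ) := by
    rw [← integral_complex_ofReal'', ← integral_complex_ofReal'']
    exact flip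
  exact Complex.ofReal_inj.mp key

lemma key3_aux (d : ℕ) (F : SchwartzMap (E (d + d)) ℂ) (x : E d) :
    (∫ y : E d, ‖F (app ((2:ℝ)⁻¹ • (x - y)) ((2:ℝ)⁻¹ • (x + y)))‖)
      = 2 ^ d * ∫ u, ‖F (app u (x - u))‖ := by
  have harg : ∀ y : E d, (2:ℝ)⁻¹ • (x + y) = x - (2:ℝ)⁻¹ • (x - y) := fun y => by
    module
  have h1 : (fun y : E d => ‖F (app ((2:ℝ)⁻¹ • (x - y)) ((2:ℝ)⁻¹ • (x + y)))‖)
      = fun y => (fun t : E d => ‖F (app ((2:ℝ)⁻¹ • t) (x - (2:ℝ)⁻¹ • t))‖) (x - y) := by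
    funext y
    rw [harg y]
  rw [h1, integral_sub_left_eq_self
    (fun t : E d => ‖F (app ((2:ℝ)⁻¹ • t) (x - (2:ℝ)⁻¹ • t))‖) volume x]
  have h2 : (fun t : E d => ‖F (app ((2:ℝ)⁻¹ • t) (x - (2:ℝ)⁻¹ • t))‖)
      = fun t => (fun u : E d => ‖F (app u (x - u))‖) ((2:ℝ)⁻¹ • t) := rfl
  rw [h2, MeasureTheory.Measure.integral_comp_smul volume
    (fun u : E d => ‖F (app u (x - u))‖) ((2:ℝ)⁻¹)]
  rw [finrank_euclideanSpace_fin]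
  have habs : |(((2:ℝ)⁻¹) ^ d)⁻¹| = 2 ^ d := by
    rw [abs_of_nonneg (by positivity)]
    simp [inv_pow]
  rw [habs]
  simp [smul_eq_mul]

set_option maxHeartbeats 1000000 in
/-- Universal diagonal restriction estimate: for `F` Schwartz on `ℝ^{2d}`,
`(∫ |F̂(x,x)|² dx)^{1/2} ≤ (∫ (∫ |F((x-y)/2, (x+y)/2)| dy)² dx)^{1/2}`. -/
theorem stmt11 (d : ℕ) (hd : 1 ≤ d) (F : SchwartzMap (E (d + d)) ℂ) :
    (∫ x : E d, ‖𝓕 (F : E (d + d) → ℂ) (app x x)‖ ^ 2) ^ ((1 : ℝ) / 2) ≤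
      (∫ x : E d,
          (∫ y : E d, ‖F (app ((2 : ℝ)⁻¹ • (x - y)) ((2 : ℝ)⁻¹ • (x + y)))‖) ^ 2) ^
        ((1 : ℝ) / 2) := by
  obtain ⟨C, hC0, hCF⟩ := schwartz_app_bound F
  set B : E d → ℝ := fun u => ((1 + ‖u‖) ^ (d + 1))⁻¹ with hB
  have hBint : Integrable B := Bd_integrable d
  have hBnonneg : ∀ u, 0 ≤ B u := fun u => by rw [hB]; positivity
  have hB1 : ∀ u, B u ≤ 1 := fun u => by
    rw [hB]
    exact inv_le_one_of_one_le₀ (one_le_pow₀ (by linarith [norm_nonneg u]))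
  -- integrability of the sheared function
  have hK1 : Integrable (fun p : E d × E d => F (app p.1 p.2)) := by
    have := (mp_app (k := d) (m := d)).integrable_comp
      F.continuous.aestronglyMeasurable |>.2 (F.integrable (μ := volume))
    simpa [Function.comp_def] using this
  have hK : Integrable (fun p : E d × E d => F (app p.1 (p.2 - p.1))) := by
    have := (mp_shear (n := d)).integrable_comp hK1.1 |>.2 hK1
    simpa [Function.comp_def] using this
  have hKswap : Integrable (fun q : E d × E d => F (app q.2 (q.1 - q.2))) := by
    have := hK.swap
    simpa [Function.comp_def, Measure.volume_eq_prod] using this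
  have hslice : ∀ s : E d, Integrable (fun u : E d => F (app u (s - u))) := by
    intro s
    refine (hBint.const_mul C).mono' ?_ (ae_of_all _ fun u => hCF u (s - u))
    exact (F.continuous.comp (continuous_app.comp
      (continuous_id.prodMk (continuous_const.sub continuous_id)))).aestronglyMeasurable
  set g : E d → ℂ := fun s => ∫ u, F (app u (s - u)) with hgdef
  set h : E d → ℝ := fun s => ∫ u, ‖F (app u (s - u))‖ with hhdef
  have hgh : ∀ s, ‖g s‖ ≤ h s := fun s => norm_integral_le_integral_norm _
  have hh0 : ∀ s, 0 ≤ h s := fun s => integral_nonneg fun u => norm_nonneg _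
  set M : ℝ := C * ∫ u, B u with hM
  have hhM : ∀ s, h s ≤ M := by
    intro s
    rw [hhdef, hM, ← integral_const_mul]
    exact integral_mono (hslice s).norm (hBint.const_mul C) (fun u => hCF u (s - u))
  have hgint : Integrable g := hKswap.integral_prod_left
  have hhint : Integrable h := hKswap.norm.integral_prod_left
  have hgc : Continuous g := by
    rw [hgdef]
    refine continuous_of_dominated (fun s => (hslice s).1)
      (fun s => ae_of_all _ fun u => hCF u (s - u)) (hBint.const_mul C)
      (ae_of_all _ fun u => ?_)
    exact F.continuous.comp (continuous_app.comp
      (continuous_const.prodMk (continuous_id.sub continuous_const)))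
  -- the Fourier transform of F as a Schwartz map
  set FS : SchwartzMap (E (d + d)) ℂ := 𝓕 F with hFSdef
  have hFS : ⇑FS = 𝓕 ⇑F := rfl
  obtain ⟨C', hC'0, hC'⟩ := schwartz_app_bound FS
  set φ : E d → ℂ := fun x => 𝓕 ⇑F (app x x) with hφdef
  have hφc : Continuous φ := by
    rw [hφdef, ← hFS]
    exact FS.continuous.comp continuous_app_diag
  have hφbd : ∀ x, ‖φ x‖ ≤ C' * B x := fun x => by
    rw [hφdef]
    simpa [← hFS] using hC' x x
  have hφint : Integrable φ :=
    (hBint.const_mul C').mono' hφc.aestronglyMeasurable (ae_of_all _ fun x => by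
      simpa using hφbd x)
  have hφ2int : Integrable (fun x => ‖φ x‖ ^ 2) := by
    refine (hBint.const_mul (C' * C')).mono'
      ((hφc.norm.pow 2)).aestronglyMeasurable (ae_of_all _ fun x => ?_)
    have h1 := hφbd x
    have h2 := hBnonneg x
    have h3 := hB1 x
    simp only [norm_pow, norm_norm]
    nlinarith [norm_nonneg (φ x), hC'0,
      mul_le_mul h1 h1 (norm_nonneg (φ x)) (by positivity : (0:ℝ) ≤ C' * B x),
      mul_le_of_le_one_right (mul_nonneg (mul_nonneg hC'0 hC'0) h2) h3,
      sq_nonneg (B x)]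
  -- key1 : the Fourier transform of g is φ
  have key1 : 𝓕 g = φ := by
    funext x
    set c : E d → ℂ := fun v => ((𝐞 (-(inner ℝ v x : ℝ)) : Circle) : ℂ) with hcdef
    have hcnorm : ∀ v, ‖c v‖ = 1 := fun v => by
      rw [hcdef]; exact Circle.norm_coe _
    have hcc : Continuous c := by
      rw [hcdef]
      exact continuous_subtype_val.comp (Real.continuous_fourierChar.comp
        ((continuous_id.inner continuous_const).neg))
    have hcmul : ∀ a b : E d, c (a + b) = c a * c b := by
      intro a b
      rw [hcdef]
      dsimp only
      rw [inner_add_left, neg_add, AddChar.map_add_eq_mul, Circle.coe_mul]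
    have e1 : 𝓕 g x = ∫ s, c s * g s := by
      rw [Real.fourier_eq]
      refine integral_congr_ae (ae_of_all _ fun s => ?_)
      dsimp only
      rw [Circle.smul_def, smul_eq_mul]
    have e2 : ∀ s, c s * g s = ∫ u, c s * F (app u (s - u)) := fun s =>
      (integral_const_mul _ _).symm
    have hunc : Integrable (fun z : E d × E d => c z.1 * F (app z.2 (z.1 - z.2))) := by
      refine hKswap.bdd_mul ?_ (ae_of_all _ fun z => le_of_eq (hcnorm z.1))
      exact (hcc.comp continuous_fst).aestronglyMeasurable
    have e3 : ∫ s, ∫ u, c s * F (app u (s - u)) = ∫ u, ∫ s, c s * F (app u (s - u)) := by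
      apply integral_integral_swap
      exact hunc
    have e4 : ∀ u, ∫ s, c s * F (app u (s - u)) = c u * ∫ s, c s * F (app u s) := by
      intro u
      rw [← integral_add_right_eq_self (μ := volume) (fun s => c s * F (app u (s - u))) u]
      have : ∀ s : E d, c (s + u) * F (app u (s + u - u)) = c u * (c s * F (app u s)) := by
        intro s
        rw [add_sub_cancel_right, hcmul]
        ring
      simp_rw [this]
      rw [integral_const_mul]
    have hKc1 : Integrable (fun p : E d × E d => c p.1 * (c p.2 * F (app p.1 p.2))) := by
      have hin : Integrable (fun p : E d × E d => c p.2 * F (app p.1 p.2)) := by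
        refine hK1.bdd_mul ?_ (ae_of_all _ fun z => le_of_eq (hcnorm z.2))
        exact (hcc.comp continuous_snd).aestronglyMeasurable
      refine hin.bdd_mul ?_ (ae_of_all _ fun z => le_of_eq (hcnorm z.1))
      exact (hcc.comp continuous_fst).aestronglyMeasurable
    have e5 : φ x = ∫ u, c u * ∫ s, c s * F (app u s) := by
      rw [hφdef]
      dsimp only
      rw [Real.fourier_eq, integral_app (k := d) (m := d)]
      have : ∀ p : E d × E d,
          (𝐞 (-(inner ℝ (app p.1 p.2) (app x x) : ℝ)) : Circle) • F (app p.1 p.2)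
            = c p.1 * (c p.2 * F (app p.1 p.2)) := by
        intro p
        rw [Circle.smul_def, inner_app, hcdef]
        dsimp only
        rw [neg_add, AddChar.map_add_eq_mul, Circle.coe_mul, smul_eq_mul]
        ring
      simp_rw [this]
      rw [Measure.volume_eq_prod, MeasureTheory.integral_prod _ hKc1]
      congr 1
      funext u
      dsimp only
      rw [integral_const_mul]
    rw [e1]
    simp_rw [e2]
    rw [e3]
    simp_rw [e4]
    rw [← e5]
  -- Plancherel
  have key2 : ∫ x, ‖φ x‖ ^ 2 = ∫ x, ‖g x‖ ^ 2 := by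
    rw [← key1]
    exact plancherel_aux hgc hgint (key1 ▸ hφint)
  -- change of variables on the right-hand side
  have key3 : ∀ x : E d,
      (∫ y : E d, ‖F (app ((2:ℝ)⁻¹ • (x - y)) ((2:ℝ)⁻¹ • (x + y)))‖) = 2 ^ d * h x := by
    intro x
    rw [hhdef]
    exact key3_aux d F x
  -- integrability of h^2 and friends
  have hh2int : Integrable (fun s => h s ^ 2) := by
    have := hhint.bdd_mul (f := h) (g := h) (c := M) hhint.aestronglyMeasurable
      (ae_of_all _ fun s => by rw [Real.norm_eq_abs, abs_of_nonneg (hh0 s)]; exact hhM s)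
    refine this.congr (ae_of_all _ fun s => ?_)
    ring
  have hg2int : Integrable (fun s => ‖g s‖ ^ 2) := by
    refine hh2int.mono' ((hgc.norm.pow 2)).aestronglyMeasurable (ae_of_all _ fun s => ?_)
    have h1 := hgh s
    have h2 := hh0 s
    simp only [norm_pow, norm_norm]
    nlinarith [norm_nonneg (g s)]
  have h4h2int : Integrable (fun s => (2 ^ d * h s) ^ 2) := by
    have := hh2int.const_mul ((2:ℝ) ^ d * 2 ^ d)
    refine this.congr (ae_of_all _ fun s => ?_)
    ring
  -- final chaining
  have step1 : ∫ x, ‖g x‖ ^ 2 ≤ ∫ x, (2 ^ d * h x) ^ 2 := by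
    refine integral_mono hg2int h4h2int (fun x => ?_)
    have h1 := hgh x
    have h2 := hh0 x
    have h3 : (1:ℝ) ≤ 2 ^ d := one_le_pow₀ (by norm_num)
    have h4 : ‖g x‖ ^ 2 ≤ h x ^ 2 := by nlinarith [norm_nonneg (g x)]
    have h5 : (1:ℝ) ≤ (2 ^ d) ^ 2 := one_le_pow₀ h3
    nlinarith [sq_nonneg (h x)]
  calc (∫ x : E d, ‖𝓕 (F : E (d + d) → ℂ) (app x x)‖ ^ 2) ^ ((1:ℝ)/2)
      = (∫ x, ‖g x‖ ^ 2) ^ ((1:ℝ)/2) := by rw [← key2]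
    _ ≤ (∫ x, (2 ^ d * h x) ^ 2) ^ ((1:ℝ)/2) := by
        refine Real.rpow_le_rpow (integral_nonneg fun x => by positivity) step1 (by norm_num)
    _ = (∫ x : E d,
          (∫ y : E d, ‖F (app ((2 : ℝ)⁻¹ • (x - y)) ((2 : ℝ)⁻¹ • (x + y)))‖) ^ 2) ^
        ((1 : ℝ) / 2) := by
        congr 1
        refine integral_congr_ae (ae_of_all _ fun x => ?_)
        dsimp only
        rw [key3 x]
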